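/- Suppose θ_i > 0 for all i = 1,…,n, the family {F_θ} satisfies the MLR assumption, and T_1,…,T_n are positively regression dependent (Assumption 3). Then for every j ∈ {1,…,n} with Pr(T_1 > c_2, …, T_{j−1} > c_2) > 0, Pr(T_j < c_1 | T_1 > c_2, …, T_{j−1} > c_2) + α·Pr(T_j > c_2 | T_1 > c_2, …, T_{j−1} > c_2) ≤ α; in particular, for j = 1, Pr(T_1 < c_1) + α·Pr(T_1 > c_2) ≤ α. -/

import Mathlib

open MeasureTheory ProbabilityTheory

lemma mlr_key_aux (f g : ℝ → ℝ) (hf : ∀ x, 0 ≤ f x) (hg : ∀ x, 0 ≤ g x)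
    (c₁ c₂ : ℝ) (hc : c₁ < c₂)
    (hMLR : ∀ x₁ x₂ : ℝ, x₁ < x₂ → g x₁ * f x₂ ≤ g x₂ * f x₁)
    (h0 : IntegrableOn f (Set.Iic c₂)) (hθi : IntegrableOn g (Set.Iic c₂)) :
    (∫ t in Set.Iic c₁, g t) * (∫ t in Set.Iic c₂, f t) ≤
      (∫ t in Set.Iic c₁, f t) * (∫ t in Set.Iic c₂, g t) := by
  have hsub : Set.Iic c₁ ⊆ Set.Iic c₂ := Set.Iic_subset_Iic.2 hc.le
  have h0a : IntegrableOn f (Set.Iic c₁) := h0.mono_set hsub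
  have h0b : IntegrableOn f (Set.Ioc c₁ c₂) := h0.mono_set Set.Ioc_subset_Iic_self
  have hθa : IntegrableOn g (Set.Iic c₁) := hθi.mono_set hsub
  have hθb : IntegrableOn g (Set.Ioc c₁ c₂) := hθi.mono_set Set.Ioc_subset_Iic_self
  have hsplit0 : ∫ t in Set.Iic c₂, f t
      = (∫ t in Set.Iic c₁, f t) + ∫ t in Set.Ioc c₁ c₂, f t := by
    rw [← setIntegral_union (Set.Iic_disjoint_Ioc le_rfl) measurableSet_Ioc h0a h0b,
      Set.Iic_union_Ioc_eq_Iic hc.le]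
  have hsplitθ : ∫ t in Set.Iic c₂, g t
      = (∫ t in Set.Iic c₁, g t) + ∫ t in Set.Ioc c₁ c₂, g t := by
    rw [← setIntegral_union (Set.Iic_disjoint_Ioc le_rfl) measurableSet_Ioc hθa hθb,
      Set.Iic_union_Ioc_eq_Iic hc.le]
  have key : (∫ t in Set.Iic c₁, g t) * (∫ t in Set.Ioc c₁ c₂, f t)
      ≤ (∫ t in Set.Iic c₁, f t) * (∫ t in Set.Ioc c₁ c₂, g t) := by
    rw [← integral_mul_const, ← integral_mul_const]
    apply setIntegral_mono_on (hθa.mul_const _) (h0a.mul_const _) measurableSet_Iic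
    intro s hs
    rw [← integral_const_mul, ← integral_const_mul]
    apply setIntegral_mono_on (h0b.const_mul _) (hθb.const_mul _) measurableSet_Ioc
    intro t ht
    have hst : s < t := lt_of_le_of_lt hs ht.1
    have h := hMLR s t hst
    nlinarith [h]
  have n1 : 0 ≤ ∫ t in Set.Iic c₁, f t := setIntegral_nonneg measurableSet_Iic fun x _ => hf x
  have n2 : 0 ≤ ∫ t in Set.Iic c₁, g t := setIntegral_nonneg measurableSet_Iic fun x _ => hg x
  rw [hsplit0, hsplitθ]
  nlinarith [key]

/-- Lemma 5: If all θ_i > 0, the family satisfies MLR and the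
statistics are positively regression dependent, then for every j with
Pr(T₁ > c₂,…,T_{j−1} > c₂) > 0,
Pr(T_j < c₁ | ·) + α·Pr(T_j > c₂ | ·) ≤ α. -/
theorem conditional_error_bound_lemma5
    {Ω : Type*} [MeasurableSpace Ω] (Pr : Measure Ω) [IsProbabilityMeasure Pr]
    (F : ℝ → ℝ → ℝ)
    (hFcont : ∀ θ, Continuous (F θ))
    (hFmono : ∀ θ, Monotone (F θ))
    (hF0strict : StrictMono (F 0))
    (hFsym : ∀ x : ℝ, F 0 (-x) = 1 - F 0 x)
    (hstoch : ∀ θ θ' : ℝ, θ ≤ θ' → ∀ x, F θ' x ≤ F θ x)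
    -- MLR assumption (Assumption 2)
    (f : ℝ → ℝ → ℝ)
    (hf_nonneg : ∀ θ x, 0 ≤ f θ x)
    (hf_meas : ∀ θ, Measurable (f θ))
    (hf_cdf : ∀ θ x, F θ x = ∫ t in Set.Iic x, f θ t)
    (hMLR : ∀ θ θ' : ℝ, θ < θ' → ∀ x₁ x₂ : ℝ, x₁ < x₂ →
      f θ' x₁ * f θ x₂ ≤ f θ' x₂ * f θ x₁)
    (n : ℕ) (θ : Fin n → ℝ) (hθpos : ∀ i, 0 < θ i)
    (T : Fin n → Ω → ℝ) (hT : ∀ i, Measurable (T i))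
    (hcdf : ∀ i x, (Pr {ω | T i ω ≤ x}).toReal = F (θ i) x)
    -- Positive regression dependence (Assumption 3, all nulls false with θ_i > 0)
    (hPRD : ∀ k : Fin n, ∀ φ : (Fin n → ℝ) → ℝ,
      Measurable φ → Monotone φ → (∃ C, ∀ x, |φ x| ≤ C) →
      ∀ u u' : ℝ, u ≤ u' →
        (Pr {ω | u ≤ T k ω} ≠ 0 → Pr {ω | u' ≤ T k ω} ≠ 0 →
          (∫ ω in {ω | u ≤ T k ω}, φ (fun i => T i ω) ∂Pr)
              / (Pr {ω | u ≤ T k ω}).toReal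
            ≤ (∫ ω in {ω | u' ≤ T k ω}, φ (fun i => T i ω) ∂Pr)
              / (Pr {ω | u' ≤ T k ω}).toReal) ∧
        (Pr {ω | T k ω < u} ≠ 0 → Pr {ω | T k ω < u'} ≠ 0 →
          (∫ ω in {ω | T k ω < u}, φ (fun i => T i ω) ∂Pr)
              / (Pr {ω | T k ω < u}).toReal
            ≤ (∫ ω in {ω | T k ω < u'}, φ (fun i => T i ω) ∂Pr)
              / (Pr {ω | T k ω < u'}).toReal))
    (α : ℝ) (hα : α ∈ Set.Ioo (0 : ℝ) 1)
    (c₁ c₂ : ℝ) (hc₁ : F 0 c₁ = α / 2) (hc₂ : F 0 c₂ = 1 - α / 2) :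
    ∀ j : Fin n,
      Pr {ω | ∀ l : Fin n, l < j → c₂ < T l ω} ≠ 0 →
      (Pr ({ω | T j ω < c₁} ∩ {ω | ∀ l : Fin n, l < j → c₂ < T l ω})).toReal
          / (Pr {ω | ∀ l : Fin n, l < j → c₂ < T l ω}).toReal
        + α * ((Pr ({ω | c₂ < T j ω} ∩ {ω | ∀ l : Fin n, l < j → c₂ < T l ω})).toReal
          / (Pr {ω | ∀ l : Fin n, l < j → c₂ < T l ω}).toReal)
        ≤ α := by
  intro j hC0
  classical
  set C : Set Ω := {ω | ∀ l : Fin n, l < j → c₂ < T l ω} with hCdef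
  -- measurability of C
  have hCmeas : MeasurableSet C := by
    have : C = ⋂ l : Fin n, ⋂ (_ : l < j), {ω | c₂ < T l ω} := by
      ext ω; simp [hCdef, Set.mem_iInter]
    rw [this]
    exact MeasurableSet.iInter fun l => MeasurableSet.iInter fun _ =>
      measurableSet_lt measurable_const (hT l)
  have hPC : 0 < (Pr C).toReal := ENNReal.toReal_pos hC0 (measure_ne_top Pr C)
  have hBle : (Pr ({ω | c₂ < T j ω} ∩ C)).toReal ≤ (Pr C).toReal :=
    ENNReal.toReal_mono (measure_ne_top Pr C) (measure_mono Set.inter_subset_right)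
  -- c₁ < c₂
  have hcc : c₁ < c₂ := by
    have : F 0 c₁ < F 0 c₂ := by rw [hc₁, hc₂]; linarith [hα.2]
    exact hF0strict.lt_iff_lt.1 this
  -- Pr(T j < x) = F (θ j) x
  have hlt : ∀ x : ℝ, (Pr {ω | T j ω < x}).toReal = F (θ j) x := by
    intro x
    apply le_antisymm
    · rw [← hcdf j x]
      exact ENNReal.toReal_mono (measure_ne_top Pr _)
        (measure_mono fun ω h => le_of_lt (show T j ω < x from h))
    · have hseq : Filter.Tendsto (fun m : ℕ => x - 1 / (m + 1 : ℝ)) Filter.atTop (nhds x) := by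
        have h : Filter.Tendsto (fun n : ℕ => 1 / ((n : ℝ) + 1)) Filter.atTop (nhds 0) :=
          tendsto_one_div_add_atTop_nhds_zero_nat
        simpa using Filter.Tendsto.sub (tendsto_const_nhds (x := x)) h
      have hFt : Filter.Tendsto (fun m : ℕ => F (θ j) (x - 1 / (m + 1 : ℝ)))
          Filter.atTop (nhds (F (θ j) x)) := ((hFcont (θ j)).tendsto x).comp hseq
      refine le_of_tendsto hFt (Filter.Eventually.of_forall fun m => ?_)
      rw [← hcdf j (x - 1 / (m + 1 : ℝ))]
      refine ENNReal.toReal_mono (measure_ne_top Pr _) (measure_mono fun ω h => ?_)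
      have hm : (0 : ℝ) < 1 / (m + 1 : ℝ) := by positivity
      have h' : T j ω ≤ x - 1 / (m + 1 : ℝ) := h
      show T j ω < x
      linarith
  by_cases hp1 : Pr {ω | T j ω < c₁} = 0
  · -- degenerate case
    have hA0 : Pr ({ω | T j ω < c₁} ∩ C) = 0 :=
      le_antisymm (le_trans (measure_mono Set.inter_subset_left) hp1.le) (zero_le)
    rw [hA0]
    simp only [ENNReal.toReal_zero, zero_div, zero_add]
    have h1 : (Pr ({ω | c₂ < T j ω} ∩ C)).toReal / (Pr C).toReal ≤ 1 :=
      (div_le_one hPC).2 hBle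
    nlinarith [hα.1, h1]
  · have hp2 : Pr {ω | T j ω < c₂} ≠ 0 := by
      intro h
      exact hp1 (le_antisymm (le_trans (measure_mono fun ω hw => lt_trans hw hcc) h.le)
        (zero_le))
    have hp1R : 0 < (Pr {ω | T j ω < c₁}).toReal :=
      ENNReal.toReal_pos hp1 (measure_ne_top Pr _)
    have hp2R : 0 < (Pr {ω | T j ω < c₂}).toReal :=
      ENNReal.toReal_pos hp2 (measure_ne_top Pr _)
    -- the monotone bounded measurable φ : indicator of the conditioning event
    set S : Set (Fin n → ℝ) := {x | ∀ l : Fin n, l < j → c₂ < x l} with hSdef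
    have hSmeas : MeasurableSet S := by
      have : S = ⋂ l : Fin n, ⋂ (_ : l < j), {x : Fin n → ℝ | c₂ < x l} := by
        ext x; simp [hSdef, Set.mem_iInter]
      rw [this]
      exact MeasurableSet.iInter fun l => MeasurableSet.iInter fun _ =>
        measurableSet_lt measurable_const (measurable_pi_apply l)
    set φ : (Fin n → ℝ) → ℝ := fun x => if x ∈ S then (1 : ℝ) else 0 with hφdef
    have hφmeas : Measurable φ := Measurable.ite hSmeas measurable_const measurable_const
    have hφmono : Monotone φ := by
      intro x y hxy
      simp only [hφdef]
      by_cases hx : x ∈ S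
      · have hy : y ∈ S := fun l hl => lt_of_lt_of_le (hx l hl) (hxy l)
        simp [hx, hy]
      · by_cases hy : y ∈ S <;> simp [hx, hy]
    have hφbd : ∃ Cb, ∀ x, |φ x| ≤ Cb := by
      refine ⟨1, fun x => ?_⟩
      simp only [hφdef]
      split <;> simp
    -- integral of φ over a set is the measure of the intersection
    have hint : ∀ u : ℝ, (∫ ω in {ω | T j ω < u}, φ (fun i => T i ω) ∂Pr)
        = (Pr ({ω | T j ω < u} ∩ C)).toReal := by
      intro u
      have hco : ∀ ω : Ω, φ (fun i => T i ω) = C.indicator (fun _ => (1 : ℝ)) ω := by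
        intro ω
        simp only [hφdef, Set.indicator_apply]
        congr 1
      simp_rw [hco]
      rw [setIntegral_indicator hCmeas, setIntegral_const]
      simp
      rfl
    have hprd := (hPRD j φ hφmeas hφmono hφbd c₁ c₂ hcc.le).2 hp1 hp2
    rw [hint c₁, hint c₂] at hprd
    -- F (θ j) c₁ ≤ α * F (θ j) c₂ via MLR
    have hFpos2 : 0 < F (θ j) c₂ := by rw [← hlt c₂]; exact hp2R
    have hint0 : IntegrableOn (f 0) (Set.Iic c₂) := by
      by_contra h
      have h2 := hc₂
      rw [hf_cdf 0 c₂, integral_undef h] at h2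
      linarith [hα.2]
    have hintθ : IntegrableOn (f (θ j)) (Set.Iic c₂) := by
      by_contra h
      have h2 := hFpos2
      rw [hf_cdf (θ j) c₂, integral_undef h] at h2
      linarith
    have hmlr : F (θ j) c₁ * F 0 c₂ ≤ F 0 c₁ * F (θ j) c₂ := by
      rw [hf_cdf (θ j) c₁, hf_cdf 0 c₂, hf_cdf 0 c₁, hf_cdf (θ j) c₂]
      exact mlr_key_aux (f 0) (f (θ j)) (hf_nonneg 0) (hf_nonneg (θ j)) c₁ c₂ hcc
        (fun x₁ x₂ h => hMLR 0 (θ j) (hθpos j) x₁ x₂ h) hint0 hintθ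
    have hFnn1 : 0 ≤ F (θ j) c₁ := by rw [← hlt c₁]; exact hp1R.le
    have hratio : F (θ j) c₁ ≤ α * F (θ j) c₂ := by
      rw [hc₁, hc₂] at hmlr
      nlinarith [hα.1, hα.2, hFnn1, hFpos2]
    -- combine
    have hXnn : 0 ≤ (Pr ({ω | T j ω < c₂} ∩ C)).toReal := ENNReal.toReal_nonneg
    have hAnn : 0 ≤ (Pr ({ω | T j ω < c₁} ∩ C)).toReal := ENNReal.toReal_nonneg
    have hAX : (Pr ({ω | T j ω < c₁} ∩ C)).toReal
        ≤ α * (Pr ({ω | T j ω < c₂} ∩ C)).toReal := by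
      rw [div_le_div_iff₀ hp1R hp2R] at hprd
      rw [hlt c₁, hlt c₂] at hprd
      nlinarith [hratio, hFpos2, hXnn]
    have hdisj : Disjoint ({ω | T j ω < c₂} ∩ C) ({ω | c₂ < T j ω} ∩ C) := by
      rw [Set.disjoint_left]
      rintro ω ⟨h1, -⟩ ⟨h2, -⟩
      exact lt_asymm (show T j ω < c₂ from h1) (show c₂ < T j ω from h2)
    have hsum : (Pr ({ω | T j ω < c₂} ∩ C)).toReal + (Pr ({ω | c₂ < T j ω} ∩ C)).toReal
        ≤ (Pr C).toReal := by
      have hm : Pr ({ω | T j ω < c₂} ∩ C) + Pr ({ω | c₂ < T j ω} ∩ C) ≤ Pr C := by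
        rw [← measure_union hdisj ((measurableSet_lt measurable_const (hT j)).inter hCmeas)]
        exact measure_mono (Set.union_subset Set.inter_subset_right Set.inter_subset_right)
      have := ENNReal.toReal_mono (measure_ne_top Pr C) hm
      rwa [ENNReal.toReal_add (measure_ne_top Pr _) (measure_ne_top Pr _)] at this
    calc (Pr ({ω | T j ω < c₁} ∩ C)).toReal / (Pr C).toReal
          + α * ((Pr ({ω | c₂ < T j ω} ∩ C)).toReal / (Pr C).toReal)
        = ((Pr ({ω | T j ω < c₁} ∩ C)).toReal
            + α * (Pr ({ω | c₂ < T j ω} ∩ C)).toReal) / (Pr C).toReal := by ring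
      _ ≤ (α * (Pr C).toReal) / (Pr C).toReal := by
          gcongr
          nlinarith [hAX, hsum, hα.1]
      _ = α := by field_simp
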